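/- Let X have a gamma distribution with shape parameter k = 2C_1 log(t + C_3 log t) and rate parameter 2λ (i.e., X is a sum of exponential waiting times, with moment generating function E[e^{θX}] = (2λ/(2λ-θ))^k for 0 < θ < 2λ). If C_3 is chosen so that λC_3 - 4C_1 ≥ 2, then for all sufficiently large t, P(X > C_3 log t) ≤ t^{-2}. -/
import Mathlib


open MeasureTheory ProbabilityTheory

/-- Let X have a gamma distribution with shape k(t) = 2C₁ log(t + C₃ log t)
and rate 2λ, in the sense that E[e^{θX}] = (2λ/(2λ-θ))^{k(t)} for 0 < θ < 2λ.
If λC₃ - 4C₁ ≥ 2, then for all sufficiently large t, P(X > C₃ log t) ≤ t⁻². -/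
theorem stmt_13 (C1 C3 lam : ℝ) (hC1 : 0 < C1) (hC3 : 0 < C3) (hlam : 0 < lam)
    (h : 2 ≤ lam * C3 - 4 * C1) :
    ∃ t0 : ℝ, ∀ t : ℝ, t0 ≤ t →
      ∀ (Ω : Type) [MeasurableSpace Ω] (P : Measure Ω), IsProbabilityMeasure P →
        ∀ X : Ω → ℝ, Measurable X → (∀ ω, 0 ≤ X ω) →
          Integrable (fun ω => Real.exp (lam * X ω)) P →
          (∀ θ ∈ Set.Ioo (0 : ℝ) (2 * lam),
            mgf X P θ = (2 * lam / (2 * lam - θ)) ^ (2 * C1 * Real.log (t + C3 * Real.log t))) →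
          P {ω | C3 * Real.log t < X ω} ≤ ENNReal.ofReal (t ^ (-(2 : ℝ))) := by
  refine ⟨max 3 (1 + C3), fun t ht Ω _ P hP X hX hX0 hInt hmgf => ?_⟩
  have ht3 : (3:ℝ) ≤ t := le_trans (le_max_left _ _) ht
  have htC : 1 + C3 ≤ t := le_trans (le_max_right _ _) ht
  have ht0 : (0:ℝ) < t := by linarith
  have ht1 : (1:ℝ) < t := by linarith
  have hlogt : 0 ≤ Real.log t := Real.log_nonneg ht1.le
  -- log t ≤ t
  have hlogle : Real.log t ≤ t := by
    have := Real.log_le_sub_one_of_pos ht0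
    linarith
  set L := Real.log (t + C3 * Real.log t) with hL
  have hargpos : 0 < t + C3 * Real.log t := by positivity
  have hLnn : 0 ≤ L := Real.log_nonneg (by nlinarith)
  -- t + C3 log t ≤ t^2
  have harg_le : t + C3 * Real.log t ≤ t * t := by nlinarith
  have hL2 : L ≤ 2 * Real.log t := by
    have h1 : L ≤ Real.log (t * t) := Real.log_le_log hargpos harg_le
    rw [Real.log_mul ht0.ne' ht0.ne'] at h1
    linarith
  have hlog2 : Real.log 2 ≤ 1 := by
    have := Real.log_le_sub_one_of_pos (by norm_num : (0:ℝ) < 2)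
    linarith
  have hlamIoo : lam ∈ Set.Ioo (0:ℝ) (2 * lam) := ⟨hlam, by linarith⟩
  have hmgf_lam : mgf X P lam = (2:ℝ) ^ (2 * C1 * L) := by
    have := hmgf lam hlamIoo
    have h2 : 2 * lam / (2 * lam - lam) = 2 := by
      have hd : 2 * lam - lam = lam := by ring
      rw [hd, mul_div_assoc, div_self hlam.ne', mul_one]
    rw [h2] at this
    exact this
  have hcher := measure_ge_le_exp_mul_mgf (μ := P) (X := X) (C3 * Real.log t) hlam.le hInt
  calc P {ω | C3 * Real.log t < X ω}
      ≤ P {ω | C3 * Real.log t ≤ X ω} :=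
        measure_mono (Set.setOf_subset_setOf.mpr fun ω => le_of_lt)
    _ = ENNReal.ofReal (P {ω | C3 * Real.log t ≤ X ω}).toReal :=
        (ENNReal.ofReal_toReal (measure_ne_top P _)).symm
    _ ≤ ENNReal.ofReal (Real.exp (-lam * (C3 * Real.log t)) * mgf X P lam) :=
        ENNReal.ofReal_le_ofReal hcher
    _ ≤ ENNReal.ofReal (t ^ (-(2:ℝ))) := by
        apply ENNReal.ofReal_le_ofReal
        rw [hmgf_lam, Real.rpow_def_of_pos (by norm_num : (0:ℝ) < 2),
          Real.rpow_def_of_pos ht0, ← Real.exp_add]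
        apply Real.exp_le_exp.mpr
        have hlog2nn : 0 ≤ Real.log 2 := Real.log_nonneg (by norm_num)
        have hLl2 : L * Real.log 2 ≤ 2 * Real.log t := by nlinarith
        have hk := mul_le_mul_of_nonneg_left hLl2 (by linarith : (0:ℝ) ≤ 2 * C1)
        nlinarith [mul_le_mul_of_nonneg_right h hlogt]
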